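/- (Equation (16): a single h-term vanishes when the hook cannot be removed.) Let k ≥ 1 and n ≥ 2k, and let h satisfy 1 < h < n, d_h := gcd(n,h) ≠ 1, and (n/d_h) ∤ k. Let σ ∈ Equiv.Perm (Fin (2*n)) be the n-cycle with σ(i) = i+1 mod n for i < n and σ(i) = i for i ≥ n, and let P be the subgroup of Equiv.Perm (Fin (2*n)) consisting of all permutations π with π(i) = i for every i < n. Then Σ_{π ∈ P} (F k (σ^h * π) − F (k−1) (σ^h * π)) = 0. -/

import Mathlib

/-- `F k τ` is the number of `k`-element subsets of `Fin m` invariant under `τ`. -/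
def F {m : ℕ} (k : ℕ) (τ : Equiv.Perm (Fin m)) : ℕ :=
  ((Finset.univ : Finset (Finset (Fin m))).filter
    (fun s => s.card = k ∧ s.image τ = s)).card

open Finset Equiv

lemma sigma_pow_val {n : ℕ} (hn0 : 0 < n) (σ : Equiv.Perm (Fin (2*n)))
    (hσ : ∀ i : Fin (2 * n),
      ((σ i : ℕ) = if (i : ℕ) < n then ((i : ℕ) + 1) % n else (i : ℕ)))
    (m : ℕ) (i : Fin (2*n)) :
    (((σ ^ m) i : ℕ)) = if (i : ℕ) < n then ((i : ℕ) + m) % n else (i : ℕ) := by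
  induction m generalizing i with
  | zero =>
    simp only [pow_zero, Equiv.Perm.one_apply]
    split_ifs with h1
    · rw [Nat.add_zero, Nat.mod_eq_of_lt h1]
    · rfl
  | succ m ih =>
    rw [pow_succ, Equiv.Perm.mul_apply, ih (σ i), hσ i]
    by_cases h1 : (i : ℕ) < n
    · simp only [if_pos h1]
      rw [if_pos (Nat.mod_lt _ hn0), Nat.mod_add_mod]
      congr 1
      omega
    · simp only [if_neg h1]

lemma sigma_pow_lt {n : ℕ} (hn0 : 0 < n) (σ : Equiv.Perm (Fin (2*n)))
    (hσ : ∀ i : Fin (2 * n),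
      ((σ i : ℕ) = if (i : ℕ) < n then ((i : ℕ) + 1) % n else (i : ℕ)))
    (m : ℕ) (i : Fin (2*n)) (hi : (i : ℕ) < n) : (((σ ^ m) i : ℕ)) < n := by
  rw [sigma_pow_val hn0 σ hσ m i, if_pos hi]
  exact Nat.mod_lt _ hn0

lemma sigma_pow_fix {n : ℕ} (hn0 : 0 < n) (σ : Equiv.Perm (Fin (2*n)))
    (hσ : ∀ i : Fin (2 * n),
      ((σ i : ℕ) = if (i : ℕ) < n then ((i : ℕ) + 1) % n else (i : ℕ)))
    (m : ℕ) (i : Fin (2*n)) (hi : ¬ (i : ℕ) < n) : (σ ^ m) i = i := by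
  have := sigma_pow_val hn0 σ hσ m i
  rw [if_neg hi] at this
  exact Fin.ext this

lemma pi_large {n : ℕ} (π : Equiv.Perm (Fin (2*n)))
    (hπ : ∀ i : Fin (2 * n), (i : ℕ) < n → π i = i)
    (x : Fin (2*n)) (hx : ¬ (x : ℕ) < n) : ¬ ((π x : ℕ)) < n := by
  intro hc
  have h1 : π (π x) = π x := hπ (π x) hc
  have := π.injective h1
  rw [this] at hc
  exact hx hc

lemma image_split {n h : ℕ} (hn0 : 0 < n) (σ : Equiv.Perm (Fin (2*n)))
    (hσ : ∀ i : Fin (2 * n),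
      ((σ i : ℕ) = if (i : ℕ) < n then ((i : ℕ) + 1) % n else (i : ℕ)))
    (π : Equiv.Perm (Fin (2*n)))
    (hπ : ∀ i : Fin (2 * n), (i : ℕ) < n → π i = i)
    (s : Finset (Fin (2*n))) :
    s.image (σ ^ h * π) =
      (s.filter fun x : Fin (2*n) => (x : ℕ) < n).image (σ ^ h) ∪
      (s.filter fun x : Fin (2*n) => ¬ (x : ℕ) < n).image π := by
  conv_lhs => rw [← Finset.filter_union_filter_not_eq (p := fun x : Fin (2*n) => (x : ℕ) < n) s]
  rw [Finset.image_union]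
  congr 1
  · apply Finset.image_congr
    intro x hx
    rw [Finset.mem_coe, Finset.mem_filter] at hx
    rw [Equiv.Perm.mul_apply, hπ x hx.2]
  · apply Finset.image_congr
    intro x hx
    rw [Finset.mem_coe, Finset.mem_filter] at hx
    rw [Equiv.Perm.mul_apply, sigma_pow_fix hn0 σ hσ h (π x) (pi_large π hπ x hx.2)]

lemma inv_iff {n h : ℕ} (hn0 : 0 < n) (σ : Equiv.Perm (Fin (2*n)))
    (hσ : ∀ i : Fin (2 * n),
      ((σ i : ℕ) = if (i : ℕ) < n then ((i : ℕ) + 1) % n else (i : ℕ)))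
    (π : Equiv.Perm (Fin (2*n)))
    (hπ : ∀ i : Fin (2 * n), (i : ℕ) < n → π i = i)
    (s : Finset (Fin (2*n))) :
    s.image (σ ^ h * π) = s ↔
      ((s.filter fun x : Fin (2*n) => (x : ℕ) < n).image (σ ^ h) = s.filter fun x : Fin (2*n) => (x : ℕ) < n) ∧
      ((s.filter fun x : Fin (2*n) => ¬ (x : ℕ) < n).image π = s.filter fun x : Fin (2*n) => ¬ (x : ℕ) < n) := by
  rw [image_split hn0 σ hσ π hπ s]
  constructor
  · intro hinv
    have hA : ∀ y ∈ (s.filter fun x : Fin (2*n) => (x : ℕ) < n).image (σ ^ h), (y : ℕ) < n := by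
      intro y hy
      rw [Finset.mem_image] at hy
      obtain ⟨x, hx, rfl⟩ := hy
      exact sigma_pow_lt hn0 σ hσ h x ((Finset.mem_filter.1 hx).2)
    have hB : ∀ y ∈ (s.filter fun x : Fin (2*n) => ¬ (x : ℕ) < n).image π, ¬ (y : ℕ) < n := by
      intro y hy
      rw [Finset.mem_image] at hy
      obtain ⟨x, hx, rfl⟩ := hy
      exact pi_large π hπ x ((Finset.mem_filter.1 hx).2)
    constructor
    · have := congrArg (Finset.filter (fun x : Fin (2*n) => (x : ℕ) < n)) hinv
      rwa [Finset.filter_union, Finset.filter_true_of_mem hA,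
        Finset.filter_false_of_mem hB, Finset.union_empty] at this
    · have := congrArg (Finset.filter (fun x : Fin (2*n) => ¬ (x : ℕ) < n)) hinv
      rwa [Finset.filter_union, Finset.filter_false_of_mem (fun y hy => not_not_intro (hA y hy)),
        Finset.filter_true_of_mem hB, Finset.empty_union] at this
  · rintro ⟨h1, h2⟩
    rw [h1, h2, Finset.filter_union_filter_not_eq]

lemma cardB2 (n : ℕ) :
    ((Finset.univ : Finset (Fin (2*n))).filter fun x : Fin (2*n) => ¬ (x : ℕ) < n).card = n := by
  have h1 : ((Finset.univ : Finset (Fin (2*n))).filter fun x : Fin (2*n) => (x : ℕ) < n).card +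
      ((Finset.univ : Finset (Fin (2*n))).filter fun x : Fin (2*n) => ¬ (x : ℕ) < n).card = 2 * n := by
    rw [Finset.card_filter_add_card_filter_not, Finset.card_univ, Fintype.card_fin]
  have h2 : ((Finset.univ : Finset (Fin (2*n))).filter fun x : Fin (2*n) => (x : ℕ) < n).card = n := by
    have he : ((Finset.univ : Finset (Fin (2*n))).filter fun x : Fin (2*n) => (x : ℕ) < n) =
        (Finset.range n).attachFin (fun m hm => by
          have := Finset.mem_range.1 hm; omega) := by
      ext x
      simp [Finset.mem_attachFin, Finset.mem_range]
    rw [he, Finset.card_attachFin, Finset.card_range]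
  omega

lemma addOrder_dvd_card {G : Type*} [AddGroup G] [Fintype G] [DecidableEq G] (g : G)
    (t : Finset G) (ht : t.image (· + g) = t) : addOrderOf g ∣ t.card := by
  induction t using Finset.strongInduction with
  | _ t ih =>
    rcases t.eq_empty_or_nonempty with rfl | ⟨x, hx⟩
    · simp
    · have hr : 0 < addOrderOf g := addOrderOf_pos g
      set r := addOrderOf g with hrdef
      have hmem : ∀ c : ℕ, x + c • g ∈ t := by
        intro c
        induction c with
        | zero => simpa using hx
        | succ c ihc =>
          have : (x + c • g) + g ∈ t.image (· + g) :=
            Finset.mem_image_of_mem _ ihc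
          rw [ht] at this
          rwa [add_assoc, ← succ_nsmul] at this
      set O : Finset G := (Finset.range r).image (fun c => x + c • g) with hO
      have hOt : O ⊆ t := by
        intro y hy
        rw [hO, Finset.mem_image] at hy
        obtain ⟨c, _, rfl⟩ := hy
        exact hmem c
      have hinj : Set.InjOn (fun c => x + c • g) (Finset.range r : Set ℕ) := by
        intro a ha b hb hab
        simp only [Finset.coe_range, Set.mem_Iio] at ha hb
        have : a • g = b • g := by
          have := add_left_cancel hab
          exact this
        exact nsmul_injOn_Iio_addOrderOf ha hb this
      have hcardO : O.card = r := by
        rw [hO, Finset.card_image_of_injOn hinj, Finset.card_range]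
      have hxO : x ∈ O := by
        rw [hO, Finset.mem_image]
        exact ⟨0, Finset.mem_range.2 hr, by simp⟩
      have hOO : O.image (· + g) = O := by
        apply Finset.eq_of_subset_of_card_le
        · intro y hy
          rw [Finset.mem_image] at hy
          obtain ⟨z, hz, rfl⟩ := hy
          rw [hO, Finset.mem_image] at hz
          obtain ⟨c, hc, rfl⟩ := hz
          rw [Finset.mem_range] at hc
          rcases Nat.lt_or_ge (c+1) r with hc1 | hc1
          · rw [hO, Finset.mem_image]
            exact ⟨c + 1, Finset.mem_range.2 hc1, by rw [succ_nsmul, add_assoc]⟩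
          · have hc2 : c + 1 = r := by omega
            have : (x + c • g) + g = x := by
              rw [add_assoc, ← succ_nsmul, hc2, hrdef, addOrderOf_nsmul_eq_zero, add_zero]
            rw [this]
            exact hxO
        · rw [Finset.card_image_of_injective _ (add_left_injective g)]
      have hsub : (t \ O).image (· + g) = t \ O := by
        rw [Finset.image_sdiff _ _ (add_left_injective g), ht, hOO]
      have hss : t \ O ⊂ t := Finset.sdiff_ssubset hOt ⟨x, hxO⟩
      have hdvd := ih (t \ O) hss hsub
      have hcards : (t \ O).card + O.card = t.card := Finset.card_sdiff_add_card_eq_card hOt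
      rw [← hcards, hcardO]
      exact Nat.dvd_add hdvd dvd_rfl

lemma e_dvd_card {n h : ℕ} (hn0 : 0 < n) (σ : Equiv.Perm (Fin (2*n)))
    (hσ : ∀ i : Fin (2 * n),
      ((σ i : ℕ) = if (i : ℕ) < n then ((i : ℕ) + 1) % n else (i : ℕ)))
    (s₁ : Finset (Fin (2*n))) (hlt : ∀ x ∈ s₁, (x : ℕ) < n)
    (hinv : s₁.image (σ ^ h) = s₁) :
    (n / Nat.gcd n h) ∣ s₁.card := by
  haveI : NeZero n := ⟨by omega⟩
  set q : Fin (2*n) → ZMod n := fun x => ((x : ℕ) : ZMod n) with hq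
  have hqinj : Set.InjOn q (s₁ : Set (Fin (2*n))) := by
    intro a ha b hb hab
    rw [Finset.mem_coe] at ha hb
    have ha' := hlt a ha
    have hb' := hlt b hb
    have hab' : ((a : ℕ) : ZMod n) = ((b : ℕ) : ZMod n) := hab
    have : ((a : ℕ) : ZMod n).val = ((b : ℕ) : ZMod n).val := by rw [hab']
    rw [ZMod.val_cast_of_lt ha', ZMod.val_cast_of_lt hb'] at this
    exact Fin.ext this
  set t : Finset (ZMod n) := s₁.image q with htdef
  have hcard : t.card = s₁.card := Finset.card_image_of_injOn hqinj
  have hcomm : ∀ x ∈ s₁, q ((σ ^ h) x) = q x + (h : ZMod n) := by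
    intro x hxx
    have hv := sigma_pow_val hn0 σ hσ h x
    rw [if_pos (hlt x hxx)] at hv
    rw [hq]
    simp only [hv]
    rw [ZMod.natCast_mod, Nat.cast_add]
  have hinvt : t.image (· + (h : ZMod n)) = t := by
    rw [htdef, Finset.image_image]
    have hstep : s₁.image ((· + (h : ZMod n)) ∘ q) = (s₁.image (σ ^ h)).image q := by
      rw [Finset.image_image]
      apply Finset.image_congr
      intro x hxx
      rw [Finset.mem_coe] at hxx
      simp only [Function.comp_apply]
      exact (hcomm x hxx).symm
    rw [hstep, hinv]
  have horder : addOrderOf ((h : ZMod n)) = n / Nat.gcd n h :=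
    ZMod.addOrderOf_coe h (by omega)
  rw [← hcard, ← horder]
  exact addOrder_dvd_card _ t hinvt

/-- The subgroup `P` as a finset. -/
def Pfin (n : ℕ) : Finset (Equiv.Perm (Fin (2*n))) :=
  (Finset.univ : Finset (Equiv.Perm (Fin (2*n)))).filter
    (fun π => ∀ i : Fin (2 * n), (i : ℕ) < n → π i = i)

lemma stab_card {n : ℕ} (t : Finset (Fin (2*n))) (ht : ∀ x ∈ t, ¬ (x : ℕ) < n)
    (m : ℕ) (hm : t.card = m) (hmn : m ≤ n) :
    ((Pfin n).filter (fun π : Equiv.Perm (Fin (2*n)) => t.image π = t)).card =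
      Nat.factorial m * Nat.factorial (n - m) := by
  classical
  set u : Finset (Fin (2*n)) :=
    ((Finset.univ : Finset (Fin (2*n))).filter fun x : Fin (2*n) => ¬ (x : ℕ) < n) \ t
    with hu
  have htu : t ⊆ ((Finset.univ : Finset (Fin (2*n))).filter
      fun x : Fin (2*n) => ¬ (x : ℕ) < n) := by
    intro x hx
    rw [Finset.mem_filter]
    exact ⟨Finset.mem_univ x, ht x hx⟩
  have hucard : u.card = n - m := by
    rw [hu, Finset.card_sdiff_of_subset htu, cardB2, hm]
  have humem : ∀ x, x ∈ u ↔ (¬ (x : ℕ) < n ∧ x ∉ t) := by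
    intro x
    rw [hu, Finset.mem_sdiff, Finset.mem_filter]
    simp [Finset.mem_univ]
  -- a member of the filtered set preserves t and u
  have key : ∀ π ∈ (Pfin n).filter (fun π : Equiv.Perm (Fin (2*n)) => t.image π = t),
      (∀ x : Fin (2*n), x ∈ t ↔ π x ∈ t) ∧ (∀ x : Fin (2*n), x ∈ u ↔ π x ∈ u) := by
    intro π hπ
    rw [Finset.mem_filter, Pfin, Finset.mem_filter] at hπ
    obtain ⟨⟨-, hP⟩, hT⟩ := hπ
    have htmem : ∀ x : Fin (2*n), x ∈ t ↔ π x ∈ t := by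
      intro x
      constructor
      · intro hx
        rw [← hT]
        exact Finset.mem_image_of_mem _ hx
      · intro hx
        rw [← hT, Finset.mem_image] at hx
        obtain ⟨y, hy, hyx⟩ := hx
        rwa [← π.injective hyx]
    refine ⟨htmem, fun x => ?_⟩
    rw [humem, humem]
    constructor
    · rintro ⟨hx1, hx2⟩
      exact ⟨pi_large π hP x hx1, fun hc => hx2 ((htmem x).2 hc)⟩
    · rintro ⟨hx1, hx2⟩
      constructor
      · intro hc
        rw [hP x hc] at hx1
        exact hx1 hc
      · intro hc
        exact hx2 ((htmem x).1 hc)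
  have hcardt : Fintype.card ↥(t : Finset (Fin (2*n))) = m := by
    rw [Fintype.card_coe, hm]
  have hcardu : Fintype.card ↥(u : Finset (Fin (2*n))) = n - m := by
    rw [Fintype.card_coe, hucard]
  have hbij : ((Pfin n).filter fun π : Equiv.Perm (Fin (2*n)) => t.image π = t).card
      = (Finset.univ : Finset (Equiv.Perm {x // x ∈ t} × Equiv.Perm {x // x ∈ u})).card := by
    refine Finset.card_bij'
      (fun π hπ => (π.subtypePerm (fun x => ((key π hπ).1 x).symm), π.subtypePerm (fun x => ((key π hπ).2 x).symm)))
      (fun pr _ => Equiv.Perm.ofSubtype pr.1 * Equiv.Perm.ofSubtype pr.2)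
      (fun π hπ => Finset.mem_univ _) ?_ ?_ ?_
    · rintro ⟨α, β⟩ -
      simp only [Finset.mem_filter, Pfin, Finset.mem_univ, true_and]
      have hfix : ∀ i : Fin (2*n), (i : ℕ) < n →
          (Equiv.Perm.ofSubtype α * Equiv.Perm.ofSubtype β) i = i := by
        intro i hi
        have hit : i ∉ t := fun hc => ht i hc hi
        have hiu : i ∉ u := fun hc => ((humem i).1 hc).1 hi
        rw [Equiv.Perm.mul_apply, Equiv.Perm.ofSubtype_apply_of_not_mem β hiu,
          Equiv.Perm.ofSubtype_apply_of_not_mem α hit]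
      refine ⟨hfix, ?_⟩
      have hsub : t.image (Equiv.Perm.ofSubtype α * Equiv.Perm.ofSubtype β) ⊆ t := by
        intro y hy
        rw [Finset.mem_image] at hy
        obtain ⟨x, hxt, rfl⟩ := hy
        have hxu : x ∉ u := fun hc => ((humem x).1 hc).2 hxt
        rw [Equiv.Perm.mul_apply, Equiv.Perm.ofSubtype_apply_of_not_mem β hxu,
          Equiv.Perm.ofSubtype_apply_of_mem α hxt]
        exact (α ⟨x, hxt⟩).2
      exact Finset.eq_of_subset_of_card_le hsub
        (le_of_eq (Finset.card_image_of_injective _ (Equiv.injective _)).symm)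
    · intro π hπ
      have hπ' := hπ
      rw [Finset.mem_filter, Pfin, Finset.mem_filter] at hπ'
      obtain ⟨⟨-, hP⟩, -⟩ := hπ'
      apply Equiv.ext
      intro x
      by_cases hxt : x ∈ t
      · have hxu : x ∉ u := fun hc => ((humem x).1 hc).2 hxt
        rw [Equiv.Perm.mul_apply, Equiv.Perm.ofSubtype_apply_of_not_mem _ hxu,
          Equiv.Perm.ofSubtype_apply_of_mem _ hxt]
        rfl
      · by_cases hxu : x ∈ u
        · rw [Equiv.Perm.mul_apply, Equiv.Perm.ofSubtype_apply_of_mem _ hxu]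
          have : ((π.subtypePerm (fun x => ((key π hπ).2 x).symm)) ⟨x, hxu⟩ : Fin (2*n)) = π x := rfl
          rw [this]
          have hπxu : π x ∈ u := ((key π hπ).2 x).1 hxu
          have hπxt : π x ∉ t := fun hc => ((humem (π x)).1 hπxu).2 hc
          rw [Equiv.Perm.ofSubtype_apply_of_not_mem _ hπxt]
        · have hxn : (x : ℕ) < n := by
            by_contra hc
            exact hxu ((humem x).2 ⟨hc, hxt⟩)
          rw [Equiv.Perm.mul_apply, Equiv.Perm.ofSubtype_apply_of_not_mem _ hxu,
            Equiv.Perm.ofSubtype_apply_of_not_mem _ hxt, hP x hxn]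
    · rintro ⟨α, β⟩ -
      refine Prod.ext ?_ ?_
      · apply Equiv.ext
        rintro ⟨x, hxt⟩
        apply Subtype.ext
        have hxu : x ∉ u := fun hc => ((humem x).1 hc).2 hxt
        show (Equiv.Perm.ofSubtype α * Equiv.Perm.ofSubtype β) x = _
        rw [Equiv.Perm.mul_apply, Equiv.Perm.ofSubtype_apply_of_not_mem β hxu,
          Equiv.Perm.ofSubtype_apply_of_mem α hxt]
      · apply Equiv.ext
        rintro ⟨x, hxu⟩
        apply Subtype.ext
        have hxt : x ∉ t := ((humem x).1 hxu).2
        show (Equiv.Perm.ofSubtype α * Equiv.Perm.ofSubtype β) x = _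
        rw [Equiv.Perm.mul_apply, Equiv.Perm.ofSubtype_apply_of_mem β hxu]
        have hβxu : ((β ⟨x, hxu⟩ : Fin (2*n))) ∈ u := (β ⟨x, hxu⟩).2
        have hβxt : ((β ⟨x, hxu⟩ : Fin (2*n))) ∉ t := ((humem _).1 hβxu).2
        rw [Equiv.Perm.ofSubtype_apply_of_not_mem α hβxt]
  rw [hbij, Finset.card_univ, Fintype.card_prod, Fintype.card_perm, Fintype.card_perm,
    hcardt, hcardu]

/-- number of `m`-element `π`-invariant subsets of the top block -/
def cnt (n : ℕ) (π : Equiv.Perm (Fin (2*n))) (m : ℕ) : ℕ :=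
  ((Finset.univ : Finset (Finset (Fin (2*n)))).filter
    (fun s₂ : Finset (Fin (2*n)) => (∀ x ∈ s₂, ¬ (x : ℕ) < n) ∧ s₂.card = m ∧ s₂.image π = s₂)).card

lemma sum_cnt {n m : ℕ} (hm : m ≤ n) :
    ∑ π ∈ Pfin n, cnt n π m = Nat.factorial n := by
  classical
  set M : Finset (Finset (Fin (2*n))) := Finset.univ.filter
    (fun s₂ : Finset (Fin (2*n)) => (∀ x ∈ s₂, ¬ (x : ℕ) < n) ∧ s₂.card = m) with hM
  have h1 : ∀ π : Equiv.Perm (Fin (2*n)),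
      cnt n π m = ∑ s₂ ∈ M, if s₂.image π = s₂ then 1 else 0 := by
    intro π
    rw [cnt]
    have he : (Finset.univ : Finset (Finset (Fin (2*n)))).filter
        (fun s₂ : Finset (Fin (2*n)) => (∀ x ∈ s₂, ¬ (x : ℕ) < n) ∧ s₂.card = m ∧ s₂.image π = s₂)
        = M.filter (fun s₂ => s₂.image π = s₂) := by
      rw [hM, Finset.filter_filter]
      apply Finset.filter_congr
      intro s₂ _
      simp [and_assoc]
    rw [he, Finset.card_filter]
  rw [Finset.sum_congr rfl (fun π _ => h1 π), Finset.sum_comm]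
  have h2 : ∀ s₂ ∈ M, (∑ π ∈ Pfin n, if s₂.image π = s₂ then 1 else 0)
      = Nat.factorial m * Nat.factorial (n - m) := by
    intro s₂ hs₂
    rw [hM, Finset.mem_filter] at hs₂
    rw [← Finset.card_filter]
    exact stab_card s₂ hs₂.2.1 m hs₂.2.2 hm
  rw [Finset.sum_congr rfl h2, Finset.sum_const, smul_eq_mul]
  have h3 : M.card = n.choose m := by
    have hMp : M = Finset.powersetCard m
        ((Finset.univ : Finset (Fin (2*n))).filter fun x : Fin (2*n) => ¬ (x : ℕ) < n) := by
      ext s₂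
      rw [Finset.mem_powersetCard, hM, Finset.mem_filter]
      constructor
      · rintro ⟨-, hs, hc⟩
        exact ⟨fun x hx => Finset.mem_filter.2 ⟨Finset.mem_univ x, hs x hx⟩, hc⟩
      · rintro ⟨hsub, hc⟩
        exact ⟨Finset.mem_univ _, fun x hx => (Finset.mem_filter.1 (hsub hx)).2, hc⟩
    rw [hMp, Finset.card_powersetCard, cardB2]
  rw [h3, ← Nat.choose_mul_factorial_mul_factorial hm, mul_assoc]

/-- admissible lower sets -/
def Inv1 (n h K : ℕ) (σ : Equiv.Perm (Fin (2*n))) : Finset (Finset (Fin (2*n))) :=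
  (Finset.univ : Finset (Finset (Fin (2*n)))).filter
    (fun s₁ : Finset (Fin (2*n)) => (∀ x ∈ s₁, (x : ℕ) < n) ∧ s₁.image (σ ^ h) = s₁ ∧ s₁.card ≤ K)

lemma F_decomp {n h K : ℕ} (hn0 : 0 < n) (σ : Equiv.Perm (Fin (2*n)))
    (hσ : ∀ i : Fin (2 * n),
      ((σ i : ℕ) = if (i : ℕ) < n then ((i : ℕ) + 1) % n else (i : ℕ)))
    (π : Equiv.Perm (Fin (2*n)))
    (hπ : ∀ i : Fin (2 * n), (i : ℕ) < n → π i = i) :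
    F K (σ ^ h * π) = ∑ s₁ ∈ Inv1 n h K σ, cnt n π (K - s₁.card) := by
  classical
  rw [F]
  rw [Finset.card_eq_sum_card_fiberwise
    (f := fun s : Finset (Fin (2*n)) => s.filter (fun x : Fin (2*n) => (x : ℕ) < n))
    (t := Inv1 n h K σ) ?hmap]
  case hmap =>
    intro s hs
    rw [Finset.mem_coe, Finset.mem_filter] at hs
    obtain ⟨-, hcard, hinvs⟩ := hs
    rw [Finset.mem_coe, Inv1, Finset.mem_filter]
    refine ⟨Finset.mem_univ _, fun x hx => (Finset.mem_filter.1 hx).2,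
      ((inv_iff hn0 σ hσ π hπ s).1 hinvs).1, ?_⟩
    exact le_trans (Finset.card_le_card (Finset.filter_subset _ _)) (le_of_eq hcard)
  apply Finset.sum_congr rfl
  intro s₁ hs₁
  rw [Inv1, Finset.mem_filter] at hs₁
  obtain ⟨-, hs₁lt, hs₁inv, hs₁le⟩ := hs₁
  rw [cnt]
  apply Finset.card_bij'
    (i := fun s _ => s.filter (fun x : Fin (2*n) => ¬ (x : ℕ) < n))
    (j := fun s₂ _ => s₁ ∪ s₂)
  · -- i maps into target
    intro s hs
    rw [Finset.mem_filter, Finset.mem_filter] at hs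
    obtain ⟨⟨-, hcard, hinvs⟩, hfib⟩ := hs
    rw [Finset.mem_filter]
    refine ⟨Finset.mem_univ _, fun x hx => (Finset.mem_filter.1 hx).2, ?_, ?_⟩
    · have hsplit := Finset.card_filter_add_card_filter_not
        (s := s) (p := fun x : Fin (2*n) => (x : ℕ) < n)
      rw [hfib, hcard] at hsplit
      omega
    · exact ((inv_iff hn0 σ hσ π hπ s).1 hinvs).2
  · -- j maps into source
    intro s₂ hs₂
    rw [Finset.mem_filter] at hs₂
    obtain ⟨-, hs₂ge, hs₂card, hs₂inv⟩ := hs₂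
    have hdisj : Disjoint s₁ s₂ := by
      rw [Finset.disjoint_left]
      intro a ha ha2
      exact (hs₂ge a ha2) (hs₁lt a ha)
    have hf1 : (s₁ ∪ s₂).filter (fun x : Fin (2*n) => (x : ℕ) < n) = s₁ := by
      rw [Finset.filter_union, Finset.filter_true_of_mem hs₁lt,
        Finset.filter_false_of_mem hs₂ge]
      exact Finset.union_empty _
    have hf2 : (s₁ ∪ s₂).filter (fun x : Fin (2*n) => ¬ (x : ℕ) < n) = s₂ := by
      rw [Finset.filter_union, Finset.filter_false_of_mem
          (fun x hx => not_not_intro (hs₁lt x hx)),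
        Finset.filter_true_of_mem hs₂ge]
      exact Finset.empty_union _
    rw [Finset.mem_filter, Finset.mem_filter]
    refine ⟨⟨Finset.mem_univ _, ?_, ?_⟩, hf1⟩
    · rw [Finset.card_union_of_disjoint hdisj, hs₂card]
      omega
    · rw [inv_iff hn0 σ hσ π hπ]
      rw [hf1, hf2]
      exact ⟨hs₁inv, hs₂inv⟩
  · -- left inverse
    intro s hs
    rw [Finset.mem_filter] at hs
    obtain ⟨-, hfib⟩ := hs
    rw [← hfib, Finset.filter_union_filter_not_eq]
  · -- right inverse
    intro s₂ hs₂
    rw [Finset.mem_filter] at hs₂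
    obtain ⟨-, hs₂ge, -, -⟩ := hs₂
    rw [Finset.filter_union, Finset.filter_false_of_mem
        (fun x hx => not_not_intro (hs₁lt x hx)),
      Finset.filter_true_of_mem hs₂ge]
    exact Finset.empty_union _

/-- Equation (16): when `d_h = gcd(n,h) ≠ 1` and `n/d_h ∤ k`,
`Σ_{π ∈ P} (F k (σ^h π) - F (k-1) (σ^h π)) = 0`. -/
theorem eq16 (n k h : ℕ) (hk : 1 ≤ k) (hn : 2 * k ≤ n)
    (hh1 : 1 < h) (hh2 : h < n) (hd : Nat.gcd n h ≠ 1)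
    (hdiv : ¬ (n / Nat.gcd n h) ∣ k) (σ : Equiv.Perm (Fin (2 * n)))
    (hσ : ∀ i : Fin (2 * n),
      ((σ i : ℕ) = if (i : ℕ) < n then ((i : ℕ) + 1) % n else (i : ℕ))) :
    ∑ π ∈ (Finset.univ : Finset (Equiv.Perm (Fin (2 * n)))).filter
        (fun π => ∀ i : Fin (2 * n), (i : ℕ) < n → π i = i),
      ((F k (σ ^ h * π) : ℤ) - (F (k - 1) (σ ^ h * π) : ℤ)) = 0 := by
  classical
  have hn0 : 0 < n := by omega
  have hkn : k ≤ n := by omega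
  have hsum : ∀ K : ℕ, K ≤ k →
      ∑ π ∈ Pfin n, F K (σ ^ h * π) = (Inv1 n h K σ).card * Nat.factorial n := by
    intro K hK
    have h1 : ∀ π ∈ Pfin n,
        F K (σ ^ h * π) = ∑ s₁ ∈ Inv1 n h K σ, cnt n π (K - s₁.card) := by
      intro π hπm
      have hπ : ∀ i : Fin (2 * n), (i : ℕ) < n → π i = i := by
        rw [Pfin, Finset.mem_filter] at hπm
        exact hπm.2
      exact F_decomp hn0 σ hσ π hπ
    rw [Finset.sum_congr rfl h1, Finset.sum_comm]
    have h2 : ∀ s₁ ∈ Inv1 n h K σ,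
        ∑ π ∈ Pfin n, cnt n π (K - s₁.card) = Nat.factorial n := by
      intro s₁ _
      exact sum_cnt (by omega : K - s₁.card ≤ n)
    rw [Finset.sum_congr rfl h2, Finset.sum_const, smul_eq_mul]
  have hInveq : Inv1 n h k σ = Inv1 n h (k - 1) σ := by
    ext s₁
    rw [Inv1, Inv1, Finset.mem_filter, Finset.mem_filter]
    constructor
    · rintro ⟨hu, hlt, hinv, hle⟩
      refine ⟨hu, hlt, hinv, ?_⟩
      have hdvd := e_dvd_card hn0 σ hσ s₁ hlt hinv
      have hne : s₁.card ≠ k := by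
        intro hc
        exact hdiv (hc ▸ hdvd)
      omega
    · rintro ⟨hu, hlt, hinv, hle⟩
      exact ⟨hu, hlt, hinv, by omega⟩
  show ∑ π ∈ Pfin n, ((F k (σ ^ h * π) : ℤ) - (F (k - 1) (σ ^ h * π) : ℤ)) = 0
  rw [Finset.sum_sub_distrib]
  have c1 : ∑ π ∈ Pfin n, (F k (σ ^ h * π) : ℤ)
      = (((Inv1 n h k σ).card * Nat.factorial n : ℕ) : ℤ) := by
    rw [← hsum k le_rfl]
    push_cast
    rfl
  have c2 : ∑ π ∈ Pfin n, (F (k - 1) (σ ^ h * π) : ℤ)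
      = (((Inv1 n h (k - 1) σ).card * Nat.factorial n : ℕ) : ℤ) := by
    rw [← hsum (k - 1) (by omega)]
    push_cast
    rfl
  rw [c1, c2, hInveq, sub_self]
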